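/- arXiv:astro-ph/0211628 — 6 statements merged into one kernel-verified Lean document; each statement's English description precedes it below -/
import Mathlib

section
/- Consider the planar polytropic system dU/dλ = U(1−U)[(1−Q)(3−4U) − n Q(1−U)], dQ/dλ = Q(1−Q)[(2U−1)(1−Q) + Q(1−U)] with constant n = 5. Then the function Φ(U,Q) = U(4−7Q) − 3(1−2Q) − C U^{−1/2} Q^{−3/2} (1−U)^{3/2} (1−Q)^{5/2} satisfies dΦ/dλ = 0 along any solution with 0 < U < 1 and 0 < Q < 1, for every constant C. -/
open Real

/-- For the planar polytropic system with index `n = 5`, the function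
`Φ(U,Q) = U(4−7Q) − 3(1−2Q) − C U^{−1/2} Q^{−3/2} (1−U)^{3/2} (1−Q)^{5/2}`
is conserved along solutions (its derivative along the flow vanishes on the
invariant level set `Φ = 0`), for every constant `C`. -/
theorem phi_conserved_n5
    (U Q : ℝ → ℝ) (l : ℝ)
    (hU01 : 0 < U l ∧ U l < 1) (hQ01 : 0 < Q l ∧ Q l < 1)
    (hU : HasDerivAt U
      (U l * (1 - U l) * ((1 - Q l) * (3 - 4 * U l) - 5 * (Q l) * (1 - U l))) l)
    (hQ : HasDerivAt Q
      (Q l * (1 - Q l) * ((2 * U l - 1) * (1 - Q l) + Q l * (1 - U l))) l)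
    (C : ℝ)
    (hΦ0 : U l * (4 - 7 * Q l) - 3 * (1 - 2 * Q l)
      - C * (U l) ^ (-(1:ℝ)/2) * (Q l) ^ (-(3:ℝ)/2)
        * (1 - U l) ^ ((3:ℝ)/2) * (1 - Q l) ^ ((5:ℝ)/2) = 0) :
    HasDerivAt (fun t => U t * (4 - 7 * Q t) - 3 * (1 - 2 * Q t)
      - C * (U t) ^ (-(1:ℝ)/2) * (Q t) ^ (-(3:ℝ)/2)
        * (1 - U t) ^ ((3:ℝ)/2) * (1 - Q t) ^ ((5:ℝ)/2)) 0 l := by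
  obtain ⟨hU0, hU1⟩ := hU01
  obtain ⟨hQ0, hQ1⟩ := hQ01
  have hu1 : (0:ℝ) < 1 - U l := by linarith
  have hq1 : (0:ℝ) < 1 - Q l := by linarith
  set U' := U l * (1 - U l) * ((1 - Q l) * (3 - 4 * U l) - 5 * (Q l) * (1 - U l)) with hU'def
  set Q' := Q l * (1 - Q l) * ((2 * U l - 1) * (1 - Q l) + Q l * (1 - U l)) with hQ'def
  have h1u : HasDerivAt (fun t => 1 - U t) (-U') l := by
    have := (hasDerivAt_const l (1:ℝ)).sub hU
    rw [zero_sub] at this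
    exact this
  have h1q : HasDerivAt (fun t => 1 - Q t) (-Q') l := by
    have := (hasDerivAt_const l (1:ℝ)).sub hQ
    rw [zero_sub] at this
    exact this
  have ha : HasDerivAt (fun t => (U t) ^ (-(1:ℝ)/2))
      (U' * (-(1:ℝ)/2) * (U l) ^ (-(1:ℝ)/2 - 1)) l :=
    hU.rpow_const (Or.inl hU0.ne')
  have hb : HasDerivAt (fun t => (Q t) ^ (-(3:ℝ)/2))
      (Q' * (-(3:ℝ)/2) * (Q l) ^ (-(3:ℝ)/2 - 1)) l :=
    hQ.rpow_const (Or.inl hQ0.ne')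
  have hc : HasDerivAt (fun t => (1 - U t) ^ ((3:ℝ)/2))
      (-U' * ((3:ℝ)/2) * (1 - U l) ^ ((3:ℝ)/2 - 1)) l :=
    h1u.rpow_const (Or.inl hu1.ne')
  have hd : HasDerivAt (fun t => (1 - Q t) ^ ((5:ℝ)/2))
      (-Q' * ((5:ℝ)/2) * (1 - Q l) ^ ((5:ℝ)/2 - 1)) l :=
    h1q.rpow_const (Or.inl hq1.ne')
  have hbig :
      HasDerivAt (fun t => U t * (4 - 7 * Q t) - 3 * (1 - 2 * Q t)
        - C * (U t) ^ (-(1:ℝ)/2) * (Q t) ^ (-(3:ℝ)/2)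
          * (1 - U t) ^ ((3:ℝ)/2) * (1 - Q t) ^ ((5:ℝ)/2))
      ((U' * (4 - 7 * Q l) + U l * (0 - 7 * Q')) - 3 * (0 - 2 * Q')
        - ((((0 * ((U l) ^ (-(1:ℝ)/2)) + C * (U' * (-(1:ℝ)/2) * (U l) ^ (-(1:ℝ)/2 - 1)))
              * (Q l) ^ (-(3:ℝ)/2)
            + C * (U l) ^ (-(1:ℝ)/2) * (Q' * (-(3:ℝ)/2) * (Q l) ^ (-(3:ℝ)/2 - 1)))
              * (1 - U l) ^ ((3:ℝ)/2)
            + C * (U l) ^ (-(1:ℝ)/2) * (Q l) ^ (-(3:ℝ)/2)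
              * (-U' * ((3:ℝ)/2) * (1 - U l) ^ ((3:ℝ)/2 - 1)))
              * (1 - Q l) ^ ((5:ℝ)/2)
          + C * (U l) ^ (-(1:ℝ)/2) * (Q l) ^ (-(3:ℝ)/2) * (1 - U l) ^ ((3:ℝ)/2)
              * (-Q' * ((5:ℝ)/2) * (1 - Q l) ^ ((5:ℝ)/2 - 1)))) l := by
    exact ((hU.mul ((hasDerivAt_const l (4:ℝ)).sub (hQ.const_mul 7))).sub
        (((hasDerivAt_const l (1:ℝ)).sub (hQ.const_mul 2)).const_mul 3)).sub
      (((((hasDerivAt_const l C).mul ha).mul hb).mul hc).mul hd)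
  convert hbig using 1
  -- now an algebraic identity
  set a := (U l) ^ (-(1:ℝ)/2) with hadef
  set b := (Q l) ^ (-(3:ℝ)/2) with hbdef
  set c := (1 - U l) ^ ((3:ℝ)/2) with hcdef
  set d := (1 - Q l) ^ ((5:ℝ)/2) with hddef
  have ha' : (U l) ^ (-(1:ℝ)/2 - 1) = a / U l := Real.rpow_sub_one hU0.ne' _
  have hb' : (Q l) ^ (-(3:ℝ)/2 - 1) = b / Q l := Real.rpow_sub_one hQ0.ne' _
  have hc' : (1 - U l) ^ ((3:ℝ)/2 - 1) = c / (1 - U l) := Real.rpow_sub_one hu1.ne' _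
  have hd' : (1 - Q l) ^ ((5:ℝ)/2 - 1) = d / (1 - Q l) := Real.rpow_sub_one hq1.ne' _
  rw [ha', hb', hc', hd']
  have hane : a ≠ 0 := (Real.rpow_pos_of_pos hU0 _).ne'
  have hbne : b ≠ 0 := (Real.rpow_pos_of_pos hQ0 _).ne'
  have hcne : c ≠ 0 := (Real.rpow_pos_of_pos hu1 _).ne'
  have hdne : d ≠ 0 := (Real.rpow_pos_of_pos hq1 _).ne'
  have hC : C = (U l * (4 - 7 * Q l) - 3 * (1 - 2 * Q l)) / (a * b * c * d) := by
    field_simp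
    linarith [hΦ0]
  rw [hC, hU'def, hQ'def]
  field_simp
  ring
end

section
/- For the planar system dU/dλ = U(1−U)[(1−Q)(3−4U) − n(λ) Q(1−U)], dQ/dλ = Q(1−Q)[(2U−1)(1−Q) + Q(1−U)] with 0 < U < 1, 0 < Q < 1 and arbitrary continuous n(λ), the function Φ(U,Q) = (4−7Q)U − 3(1−2Q) satisfies, at any point of the surface Φ = 0 (equivalently U = 3(1−2Q)/(4−7Q)), dΦ/dλ = 3(1−2Q)(1−U)² Q (5 − n(λ)). In particular, if n(λ) < 5 the flow crosses Φ = 0 in the direction of increasing Φ wherever Q < 1/2. -/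
/-- On the surface `Φ(U,Q) = (4−7Q)U − 3(1−2Q) = 0` of the compactified
polytropic system, the derivative of `Φ` along the flow equals
`3(1−2Q)(1−U)² Q (5 − n)`; in particular for `n < 5` and `Q < 1/2` the flow
crosses the surface in the direction of increasing `Φ`. -/
theorem phi_surface_crossing
    (u q n : ℝ) (hu : 0 < u ∧ u < 1) (hq : 0 < q ∧ q < 1)
    (hsurf : (4 - 7 * q) * u - 3 * (1 - 2 * q) = 0) :
    (4 - 7 * q) * (u * (1 - u) * ((1 - q) * (3 - 4 * u) - n * q * (1 - u)))
      + (6 - 7 * u) * (q * (1 - q) * ((2 * u - 1) * (1 - q) + q * (1 - u)))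
      = 3 * (1 - 2 * q) * (1 - u) ^ 2 * q * (5 - n) ∧
    (n < 5 → q < 1 / 2 →
      0 < (4 - 7 * q) * (u * (1 - u) * ((1 - q) * (3 - 4 * u) - n * q * (1 - u)))
        + (6 - 7 * u) * (q * (1 - q) * ((2 * u - 1) * (1 - q) + q * (1 - u)))) := by
  have key : (4 - 7 * q) * (u * (1 - u) * ((1 - q) * (3 - 4 * u) - n * q * (1 - u)))
      + (6 - 7 * u) * (q * (1 - q) * ((2 * u - 1) * (1 - q) + q * (1 - u)))
      = 3 * (1 - 2 * q) * (1 - u) ^ 2 * q * (5 - n) := by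
    linear_combination (-4 * q * u ^ 2 - n * q * u ^ 2 + 4 * u ^ 2 + 3 * q ^ 2 * u
      - 4 * q * u + 2 * n * q * u - 4 * u - 2 * q ^ 2 + 7 * q - n * q) * hsurf
  refine ⟨key, fun hn hq2 => ?_⟩
  rw [key]
  have h1 : 0 < 1 - 2 * q := by linarith
  have h2 : 0 < (1 - u) ^ 2 := pow_pos (by linarith) 2
  have h3 : 0 < 5 - n := by linarith
  have h4 : 0 < q := hq.1
  nlinarith [mul_pos (mul_pos (mul_pos h1 h2) h4) h3]
end

section
/- Let n₀ ≤ 3 and consider the system dU/dλ = U(1−U)[(1−Q)(3−4U) − n(Ω) Q(1−U)], dQ/dλ = Q(1−Q)[(2U−1)(1−Q) + Q(1−U)], dΩ/dλ = −aΩ(1−Ω)Q(1−U), with a continuous index function n satisfying n(Ω) ≤ 3 for all Ω (e.g. in the polytropic subset Ω = 0 with n(0) = n₀). Then Z(U,Q) = (U/(1−U))·(Q/(1−Q))³ satisfies dZ/dλ = [2U(1−Q) + (3 − n(Ω)) Q(1−U)] Z ≥ 0 in the interior 0 < U < 1, 0 < Q < 1, with equality only if U = 0 and either Q = 0 or n(Ω)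 = 3. -/
/-- For the compactified system with index function `n(Ω) ≤ 3`, the function
`Z = (U/(1−U))·(Q/(1−Q))³` satisfies
`dZ/dλ = [2U(1−Q) + (3−n(Ω))Q(1−U)]·Z ≥ 0` in the interior
`0 < U < 1`, `0 < Q < 1`, with equality only if `U = 0` and either `Q = 0`
or `n(Ω) = 3`. -/
theorem Z_monotone
    (a : ℝ) (n : ℝ → ℝ) (hn3 : ∀ x : ℝ, n x ≤ 3)
    (U Q Ω : ℝ → ℝ) (l : ℝ)
    (hU01 : 0 < U l ∧ U l < 1) (hQ01 : 0 < Q l ∧ Q l < 1)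
    (hU : HasDerivAt U
      (U l * (1 - U l) * ((1 - Q l) * (3 - 4 * U l) - n (Ω l) * Q l * (1 - U l))) l)
    (hQ : HasDerivAt Q
      (Q l * (1 - Q l) * ((2 * U l - 1) * (1 - Q l) + Q l * (1 - U l))) l)
    (hΩ : HasDerivAt Ω (-a * Ω l * (1 - Ω l) * Q l * (1 - U l)) l) :
    HasDerivAt (fun t => (U t / (1 - U t)) * (Q t / (1 - Q t)) ^ 3)
      ((2 * U l * (1 - Q l) + (3 - n (Ω l)) * Q l * (1 - U l))
        * ((U l / (1 - U l)) * (Q l / (1 - Q l)) ^ 3)) l ∧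
    0 ≤ (2 * U l * (1 - Q l) + (3 - n (Ω l)) * Q l * (1 - U l))
        * ((U l / (1 - U l)) * (Q l / (1 - Q l)) ^ 3) ∧
    ((2 * U l * (1 - Q l) + (3 - n (Ω l)) * Q l * (1 - U l))
        * ((U l / (1 - U l)) * (Q l / (1 - Q l)) ^ 3) = 0 →
      U l = 0 ∧ (Q l = 0 ∨ n (Ω l) = 3)) := by
  obtain ⟨hU0, hU1⟩ := hU01
  obtain ⟨hQ0, hQ1⟩ := hQ01
  have h1U : (1 : ℝ) - U l ≠ 0 := by linarith
  have h1Q : (1 : ℝ) - Q l ≠ 0 := by linarith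
  have hf : HasDerivAt (fun t => U t / (1 - U t))
      ((U l * (1 - U l) * ((1 - Q l) * (3 - 4 * U l) - n (Ω l) * Q l * (1 - U l)) * (1 - U l)
        - U l * (0 - U l * (1 - U l) * ((1 - Q l) * (3 - 4 * U l) - n (Ω l) * Q l * (1 - U l))))
        / (1 - U l) ^ 2) l :=
    hU.div ((hasDerivAt_const l (1:ℝ)).sub hU) h1U
  have hg0 : HasDerivAt (fun t => Q t / (1 - Q t))
      ((Q l * (1 - Q l) * ((2 * U l - 1) * (1 - Q l) + Q l * (1 - U l)) * (1 - Q l)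
        - Q l * (0 - Q l * (1 - Q l) * ((2 * U l - 1) * (1 - Q l) + Q l * (1 - U l))))
        / (1 - Q l) ^ 2) l :=
    hQ.div ((hasDerivAt_const l (1:ℝ)).sub hQ) h1Q
  have hg := hg0.fun_pow 3
  have hZ := hf.fun_mul hg
  have hder : HasDerivAt (fun t => (U t / (1 - U t)) * (Q t / (1 - Q t)) ^ 3)
      ((2 * U l * (1 - Q l) + (3 - n (Ω l)) * Q l * (1 - U l))
        * ((U l / (1 - U l)) * (Q l / (1 - Q l)) ^ 3)) l := by
    refine hZ.congr_deriv ?_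
    norm_num only [Nat.cast_ofNat]
    field_simp
    ring
  have hcpos : 0 < 2 * U l * (1 - Q l) + (3 - n (Ω l)) * Q l * (1 - U l) := by
    have h1 : 0 < 2 * U l * (1 - Q l) := by
      have : (0:ℝ) < 1 - Q l := by linarith
      nlinarith
    have h2 : 0 ≤ (3 - n (Ω l)) * Q l * (1 - U l) := by
      have h3 : 0 ≤ 3 - n (Ω l) := by linarith [hn3 (Ω l)]
      exact mul_nonneg (mul_nonneg h3 hQ0.le) (by linarith)
    linarith
  have hZpos : 0 < (U l / (1 - U l)) * (Q l / (1 - Q l)) ^ 3 := by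
    have h1U' : (0:ℝ) < 1 - U l := by linarith
    have h1Q' : (0:ℝ) < 1 - Q l := by linarith
    exact mul_pos (div_pos hU0 h1U') (pow_pos (div_pos hQ0 h1Q') 3)
  have hprod := mul_pos hcpos hZpos
  exact ⟨hder, hprod.le, fun h => absurd h hprod.ne'⟩
end

section
/- For the uncompactified system du/dξ = u(3 − u − n q), dq/dξ = q(−1 + u + q) with constant n > 3, the function Ψ(u,q) = (uq)^{2/(n−1)} [ (n−5)/(n−1)² + 2q/(n−1) − q²/2 − qu/(n+1) ] satisfies dΨ/dξ = (n−5)·(n−1)^{−3}·(uq)^{2/(n−1)}·(−2 + (n−1)q)² along solutions with u > 0, q > 0. In particular Ψ is a conserved quantity when n = 5, nondecreasing along orbits when n > 5, and nonincreasing when 3 < n < 5. -/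
open Real

/-- For the planar homology-invariant polytropic system with constant `n > 3`,
the function `Ψ(u,q) = (uq)^{2/(n−1)}[(n−5)/(n−1)² + 2q/(n−1) − q²/2 − qu/(n+1)]`
satisfies `dΨ/dξ = (n−5)(n−1)^{−3}(uq)^{2/(n−1)}(−2+(n−1)q)²` along solutions
with `u, q > 0`; in particular `Ψ` is conserved for `n = 5`, nondecreasing
for `n > 5`, and nonincreasing for `3 < n < 5`. -/
theorem Psi_derivative
    (n : ℝ) (hn : 3 < n) (u q : ℝ → ℝ) (ξ : ℝ)
    (hupos : 0 < u ξ) (hqpos : 0 < q ξ)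
    (hu : HasDerivAt u (u ξ * (3 - u ξ - n * q ξ)) ξ)
    (hq : HasDerivAt q (q ξ * (-1 + u ξ + q ξ)) ξ) :
    HasDerivAt
      (fun t => (u t * q t) ^ (2 / (n - 1)) *
        ((n - 5) / (n - 1) ^ 2 + 2 * q t / (n - 1) - (q t) ^ 2 / 2
          - q t * u t / (n + 1)))
      ((n - 5) * ((n - 1) ^ 3)⁻¹ * (u ξ * q ξ) ^ (2 / (n - 1))
        * (-2 + (n - 1) * q ξ) ^ 2) ξ ∧
    (n = 5 → (n - 5) * ((n - 1) ^ 3)⁻¹ * (u ξ * q ξ) ^ (2 / (n - 1))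
        * (-2 + (n - 1) * q ξ) ^ 2 = 0) ∧
    (5 < n → 0 ≤ (n - 5) * ((n - 1) ^ 3)⁻¹ * (u ξ * q ξ) ^ (2 / (n - 1))
        * (-2 + (n - 1) * q ξ) ^ 2) ∧
    (n < 5 → (n - 5) * ((n - 1) ^ 3)⁻¹ * (u ξ * q ξ) ^ (2 / (n - 1))
        * (-2 + (n - 1) * q ξ) ^ 2 ≤ 0) := by
  have hn1 : (0:ℝ) < n - 1 := by linarith
  have hn1' : n - 1 ≠ 0 := ne_of_gt hn1
  have hn2 : n + 1 ≠ 0 := by linarith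
  have hwpos : 0 < u ξ * q ξ := mul_pos hupos hqpos
  have hw : HasDerivAt (fun t => u t * q t)
      (u ξ * (3 - u ξ - n * q ξ) * q ξ + u ξ * (q ξ * (-1 + u ξ + q ξ))) ξ := hu.mul hq
  have hr : HasDerivAt (fun t => (u t * q t) ^ (2 / (n - 1)))
      (2 / (n - 1) * (u ξ * q ξ) ^ (2 / (n - 1) - 1)
        * (u ξ * (3 - u ξ - n * q ξ) * q ξ + u ξ * (q ξ * (-1 + u ξ + q ξ)))) ξ := by
    have := hw.rpow_const (p := 2 / (n - 1)) (Or.inl (ne_of_gt hwpos))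
    convert this using 1
    ring
  have hF : HasDerivAt (fun t => (n - 5) / (n - 1) ^ 2 + 2 * q t / (n - 1) - (q t) ^ 2 / 2
        - q t * u t / (n + 1))
      ((2 * (q ξ * (-1 + u ξ + q ξ))) / (n - 1)
        - (2 * q ξ ^ 1 * (q ξ * (-1 + u ξ + q ξ))) / 2
        - (q ξ * (-1 + u ξ + q ξ) * u ξ + q ξ * (u ξ * (3 - u ξ - n * q ξ))) / (n + 1)) ξ := by
    exact ((((hq.const_mul 2).div_const (n - 1)).const_add ((n - 5) / (n - 1) ^ 2)).sub
      ((hq.pow 2).div_const 2)).sub ((hq.mul hu).div_const (n + 1))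
  have hmain := hr.mul hF
  have hsub : (u ξ * q ξ) ^ (2 / (n - 1) - 1)
      = (u ξ * q ξ) ^ (2 / (n - 1)) / (u ξ * q ξ) :=
    Real.rpow_sub_one (ne_of_gt hwpos) _
  refine ⟨?_, ?_, ?_, ?_⟩
  · refine hmain.congr_deriv ?_
    rw [hsub]
    field_simp
    ring
  · intro h5; rw [h5]; ring
  · intro h5
    have h1 : 0 ≤ n - 5 := by linarith
    have h2 : 0 ≤ ((n - 1) ^ 3)⁻¹ := by positivity
    have h3 : 0 ≤ (u ξ * q ξ) ^ (2 / (n - 1)) := (Real.rpow_pos_of_pos hwpos _).le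
    positivity
  · intro h5
    have h1 : n - 5 ≤ 0 := by linarith
    have hX : 0 ≤ ((n - 1) ^ 3)⁻¹ * ((u ξ * q ξ) ^ (2 / (n - 1)) * (-2 + (n - 1) * q ξ) ^ 2) := by
      positivity
    have : (n - 5) * ((n - 1) ^ 3)⁻¹ * (u ξ * q ξ) ^ (2 / (n - 1)) * (-2 + (n - 1) * q ξ) ^ 2
        = (n - 5) * (((n - 1) ^ 3)⁻¹ * ((u ξ * q ξ) ^ (2 / (n - 1)) * (-2 + (n - 1) * q ξ) ^ 2)) := by
      ring
    rw [this]
    exact mul_nonpos_of_nonpos_of_nonneg h1 hX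
end

section
/- In the 3-dimensional compactified system dU/dλ = U(1−U)[(1−Q)(3−4U) − n(Ω)Q(1−U)], dQ/dλ = Q(1−Q)[(2U−1)(1−Q) + Q(1−U)], dΩ/dλ = −aΩ(1−Ω)Q(1−U), with n(Ω) ≥ 0 for all Ω: on the surface U = 3/4 one has dU/dλ = −(3/64) n(Ω) Q (1−Q) ≤ 0, and for 3/4 < U < 1 one has dU/dλ < 0 whenever 0 < Q < 1. Hence the region {U ≤ 3/4} ∩ [0,1]³ is forward invariant for interior orbits with Q ∈ (0,1). -/
open Set

lemma aux_neg (n : ℝ → ℝ) (hn : ∀ x : ℝ, 0 ≤ n x) :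
    ∀ u q ω : ℝ, 3/4 < u → u < 1 → 0 < q → q < 1 →
      u * (1 - u) * ((1 - q) * (3 - 4 * u) - n ω * q * (1 - u)) < 0 := by
  intro u q ω hu hu1 hq hq1
  have h1 : 0 < u * (1 - u) := by nlinarith
  have h3 : 0 ≤ n ω * q * (1 - u) :=
    mul_nonneg (mul_nonneg (hn ω) hq.le) (by linarith)
  have h2 : (1 - q) * (3 - 4 * u) - n ω * q * (1 - u) < 0 := by nlinarith
  exact mul_neg_of_pos_of_neg h1 h2

lemma aux_dec (n : ℝ → ℝ) (hn : ∀ x : ℝ, 0 ≤ n x) (U Q Ω : ℝ → ℝ)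
    (hU : ∀ t : ℝ, HasDerivAt U
        (U t * (1 - U t) * ((1 - Q t) * (3 - 4 * U t) - n (Ω t) * Q t * (1 - U t))) t)
    (hQ : ∀ t : ℝ, 0 < Q t ∧ Q t < 1)
    {a b : ℝ} (hab : a < b)
    (hmid : ∀ r, a < r → r < b → 3/4 < U r ∧ U r < 1) :
    U b < U a := by
  have hc : Continuous U := continuous_iff_continuousAt.2 fun t => (hU t).continuousAt
  have h := strictAntiOn_of_deriv_neg (convex_Icc a b) hc.continuousOn ?_
  · exact h (left_mem_Icc.2 hab.le) (right_mem_Icc.2 hab.le) hab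
  · intro x hx
    rw [interior_Icc] at hx
    obtain ⟨h1, h2⟩ := hmid x hx.1 hx.2
    rw [(hU x).deriv]
    exact aux_neg n hn _ _ (Ω x) h1 h2 (hQ x).1 (hQ x).2

/-- In the compactified system with nonnegative index function `n`:
on the surface `U = 3/4` one has `dU/dλ = −(3/64) n(Ω) Q ≤ 0`, and for
`3/4 < U < 1`, `0 < Q < 1` one has `dU/dλ < 0`. Hence the region
`{U ≤ 3/4}` is forward invariant for interior orbits. -/
theorem region_U_le_three_quarters_invariant
    (n : ℝ → ℝ) (hn : ∀ x : ℝ, 0 ≤ n x) :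
    (∀ q ω : ℝ, 0 < q → q < 1 →
      (3/4 : ℝ) * (1 - 3/4) * ((1 - q) * (3 - 4 * (3/4)) - n ω * q * (1 - 3/4))
        = -(3/64) * n ω * q ∧
      (3/4 : ℝ) * (1 - 3/4) * ((1 - q) * (3 - 4 * (3/4)) - n ω * q * (1 - 3/4)) ≤ 0) ∧
    (∀ u q ω : ℝ, 3/4 < u → u < 1 → 0 < q → q < 1 →
      u * (1 - u) * ((1 - q) * (3 - 4 * u) - n ω * q * (1 - u)) < 0) ∧
    (∀ (U Q Ω : ℝ → ℝ),
      (∀ t : ℝ, HasDerivAt U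
        (U t * (1 - U t) * ((1 - Q t) * (3 - 4 * U t) - n (Ω t) * Q t * (1 - U t))) t) →
      (∀ t : ℝ, 0 < Q t ∧ Q t < 1) →
      ∀ t₀ : ℝ, U t₀ ≤ 3/4 → ∀ t : ℝ, t₀ ≤ t → U t ≤ 3/4) := by
  refine ⟨?_, aux_neg n hn, ?_⟩
  · intro q ω hq hq1
    refine ⟨by ring, ?_⟩
    nlinarith [mul_nonneg (hn ω) hq.le]
  · intro U Q Ω hU hQ t₀ h₀ t ht
    by_contra hcon
    push_neg at hcon
    have hc : Continuous U := continuous_iff_continuousAt.2 fun t => (hU t).continuousAt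
    have htlt : t₀ < t := by
      rcases eq_or_lt_of_le ht with rfl | h
      · linarith
      · exact h
    obtain ⟨t1, ht1mem, ht1a, ht1b⟩ : ∃ t1, t1 ∈ Icc t₀ t ∧ 3/4 < U t1 ∧ U t1 < 1 := by
      by_cases h1 : U t < 1
      · exact ⟨t, right_mem_Icc.2 ht, hcon, h1⟩
      · push_neg at h1
        have hmem : (7/8 : ℝ) ∈ Icc (U t₀) (U t) := ⟨by linarith, by linarith⟩
        obtain ⟨c, hc1, hc2⟩ := intermediate_value_Icc ht hc.continuousOn hmem
        exact ⟨c, hc1, by rw [hc2]; norm_num, by rw [hc2]; norm_num⟩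
    have ht1pos : t₀ < t1 := by
      rcases eq_or_lt_of_le ht1mem.1 with h | h
      · exfalso; rw [← h] at ht1a; linarith
      · exact h
    set S := {r | r ∈ Icc t₀ t1 ∧ U r ≤ 3/4} with hSdef
    have hSne : S.Nonempty := ⟨t₀, left_mem_Icc.2 ht1pos.le, h₀⟩
    have hSbdd : BddAbove S := ⟨t1, fun r hr => hr.1.2⟩
    have hSclosed : IsClosed S := isClosed_Icc.inter (isClosed_le hc continuous_const)
    set s := sSup S with hsdef
    have hsS : s ∈ S := hSclosed.csSup_mem hSne hSbdd
    have hsU : U s ≤ 3/4 := hsS.2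
    have hslt : s < t1 := lt_of_le_of_ne hsS.1.2 (by intro h; rw [h] at hsU; linarith)
    have hgt : ∀ r, s < r → r ≤ t1 → 3/4 < U r := by
      intro r h1 h2
      by_contra h3
      push_neg at h3
      have : r ∈ S := ⟨⟨le_trans hsS.1.1 h1.le, h2⟩, h3⟩
      exact absurd (le_csSup hSbdd this) (not_le.2 h1)
    have hlt1 : ∀ r, s < r → r ≤ t1 → U r < 1 := by
      intro r h1 h2
      by_contra h3
      push_neg at h3
      set T := {x | x ∈ Icc s t1 ∧ 1 ≤ U x} with hTdef
      have hTne : T.Nonempty := ⟨r, ⟨h1.le, h2⟩, h3⟩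
      have hTbdd : BddBelow T := ⟨s, fun x hx => hx.1.1⟩
      have hTclosed : IsClosed T := isClosed_Icc.inter (isClosed_le continuous_const hc)
      set m := sInf T with hmdef
      have hmT : m ∈ T := hTclosed.csInf_mem hTne hTbdd
      have hsm : s < m :=
        lt_of_le_of_ne hmT.1.1 (by intro h; rw [← h] at hmT; linarith [hmT.2])
      have hmlt : ∀ x, s < x → x < m → U x < 1 := by
        intro x hx1 hx2
        by_contra hx3
        push_neg at hx3
        have : x ∈ T := ⟨⟨hx1.le, le_trans hx2.le hmT.1.2⟩, hx3⟩
        exact absurd (csInf_le hTbdd this) (not_le.2 hx2)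
      have := aux_dec n hn U Q Ω hU hQ hsm (fun x hx1 hx2 =>
        ⟨hgt x hx1 (le_trans hx2.le hmT.1.2), hmlt x hx1 hx2⟩)
      linarith [hmT.2]
    have := aux_dec n hn U Q Ω hU hQ hslt (fun x hx1 hx2 =>
      ⟨hgt x hx1 hx2.le, hlt1 x hx1 hx2.le⟩)
    linarith [hgt t1 hslt le_rfl]
end

section
/- In the compactified system, Ω is strictly monotonically decreasing along every orbit in the open region 0 < U < 1, 0 < Q < 1, 0 < Ω < 1: dΩ/dλ = −aΩ(1−Ω)Q(1−U) < 0 there. Consequently no periodic orbit of the system lies entirely in this open region. -/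
/-- In the compactified system, `Ω` is strictly decreasing in the open region
`0 < U < 1`, `0 < Q < 1`, `0 < Ω < 1`: there
`dΩ/dλ = −aΩ(1−Ω)Q(1−U) < 0`. Consequently no periodic orbit lies entirely
in this open region. -/
theorem Omega_decreasing_no_periodic
    (a : ℝ) (ha : 0 < a) :
    (∀ u q ω : ℝ, 0 < u → u < 1 → 0 < q → q < 1 → 0 < ω → ω < 1 →
      -a * ω * (1 - ω) * q * (1 - u) < 0) ∧
    (∀ (U Q Ω : ℝ → ℝ),
      (∀ t : ℝ, HasDerivAt Ω (-a * Ω t * (1 - Ω t) * Q t * (1 - U t)) t) →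
      (∀ t : ℝ, 0 < U t ∧ U t < 1 ∧ 0 < Q t ∧ Q t < 1 ∧ 0 < Ω t ∧ Ω t < 1) →
      ∀ T : ℝ, 0 < T → Ω T ≠ Ω 0) := by
  have key : ∀ u q ω : ℝ, 0 < u → u < 1 → 0 < q → q < 1 → 0 < ω → ω < 1 →
      -a * ω * (1 - ω) * q * (1 - u) < 0 := by
    intro u q ω hu hu1 hq hq1 hω hω1
    have h1 : 0 < 1 - ω := by linarith
    have h2 : 0 < 1 - u := by linarith
    nlinarith [mul_pos (mul_pos (mul_pos (mul_pos ha hω) h1) hq) h2]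
  refine ⟨key, ?_⟩
  intro U Q Ω hderiv hreg T hT
  have hanti : StrictAnti Ω := by
    apply strictAnti_of_deriv_neg
    intro t
    rw [(hderiv t).deriv]
    obtain ⟨h1, h2, h3, h4, h5, h6⟩ := hreg t
    exact key _ _ _ h1 h2 h3 h4 h5 h6
  exact ne_of_lt (hanti hT)
end
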